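/- Let U be a real random variable with distribution F satisfying E[U] = 0 and E[U²] = 1, let τ > 0, and let λ ↦ p(y; λ) be twice continuously differentiable in λ with derivatives dominated near λ₀ by an F-integrable function so that differentiation under the integral sign is justified, and suppose p(y; λ₀) > 0. Define l(η) = log ∫ p(y; λ₀ + τ √η · u) dF(u) for η ≥ 0. Then the right derivative of l at η = 0 exists and equals ∇_η l |_{η=0} = (τ²/2) E[U²] · ∇²_λ p(y; λ₀) / p(y; λ₀). -/

import Mathlib

open MeasureTheory Filter Topology
open scoped BigOperators ENNReal

/-- For the reparameterized mixture log-density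
`l(η) = log ∫ p(y; l₀ + τ√η u) dF(u)`, `η ≥ 0`, with `E[U] = 0` and `E[U²] = 1`, the right
derivative of `l` at `η = 0` exists and equals `(τ²/2) E[U²] ∇²_λ p(y; l₀)/p(y; l₀)`. -/
theorem reparameterized_first_right_derivative
    (F : Measure ℝ) [IsProbabilityMeasure F]
    (hU1 : ∫ u, u ∂F = 0) (hU2 : ∫ u, u ^ 2 ∂F = 1)
    (τ : ℝ) (hτ : 0 < τ) (l₀ : ℝ)
    (p : ℝ → ℝ)
    (hsmooth : ContDiff ℝ 2 p)
    -- domination justifying differentiation under the integral sign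
    (D : ℝ → ℝ) (hD : Integrable D F) (ε : ℝ) (hε : 0 < ε)
    (hdom : ∀ᵐ u ∂F, ∀ ξ : ℝ, |ξ| < ε → ∀ k ≤ 2,
      |u ^ k * iteratedDeriv k p (l₀ + τ * ξ * u)| ≤ D u)
    (hpos : 0 < p l₀) :
    HasDerivWithinAt
      (fun η : ℝ => Real.log (∫ u, p (l₀ + τ * Real.sqrt η * u) ∂F))
      ((τ ^ 2 / 2) * (∫ u, u ^ 2 ∂F) * (iteratedDeriv 2 p l₀ / p l₀))
      (Set.Ici 0) 0 := by
  -- basic smoothness facts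
  have h2 : ContDiff ℝ (1 + 1 : ℕ) p := by exact_mod_cast hsmooth
  have hdiffp : Differentiable ℝ p := hsmooth.differentiable (by norm_num)
  have h1 : ContDiff ℝ 1 (deriv p) := by
    have := (contDiff_succ_iff_deriv (n := 1)).mp (by exact_mod_cast h2)
    exact this.2.2
  have hdiffp' : Differentiable ℝ (deriv p) := h1.differentiable (by norm_num)
  have hcont1 : Continuous (deriv p) := h1.continuous
  have hcont2 : Continuous (deriv (deriv p)) := h1.continuous_deriv le_rfl
  have hit2 : iteratedDeriv 2 p = deriv (deriv p) := by
    rw [show (2 : ℕ) = 1 + 1 from rfl, iteratedDeriv_succ, iteratedDeriv_one]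
  set c : ℝ := iteratedDeriv 2 p l₀ with hc
  -- the two auxiliary functions
  set G : ℝ → ℝ := fun s => ∫ u, p (l₀ + τ * s * u) ∂F with hG
  set G₁ : ℝ → ℝ := fun s => ∫ u, τ * u * deriv p (l₀ + τ * s * u) ∂F with hG₁
  -- dominations
  have hdom0 : ∀ᵐ u ∂F, ∀ s : ℝ, |s| < ε → |p (l₀ + τ * s * u)| ≤ D u := by
    filter_upwards [hdom] with u h s hs
    simpa [iteratedDeriv_zero] using h s hs 0 (by norm_num)
  have hdom1 : ∀ᵐ u ∂F, ∀ s : ℝ, |s| < ε → |u * deriv p (l₀ + τ * s * u)| ≤ D u := by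
    filter_upwards [hdom] with u h s hs
    simpa [iteratedDeriv_one] using h s hs 1 (by norm_num)
  have hdom2 : ∀ᵐ u ∂F, ∀ s : ℝ, |s| < ε →
      |u ^ 2 * deriv (deriv p) (l₀ + τ * s * u)| ≤ D u := by
    filter_upwards [hdom] with u h s hs
    simpa [hit2] using h s hs 2 le_rfl
  -- measurability
  have hm0 : ∀ s : ℝ, AEStronglyMeasurable (fun u => p (l₀ + τ * s * u)) F := fun s =>
    (hsmooth.continuous.comp (by continuity)).aestronglyMeasurable
  have hm1 : ∀ s : ℝ, AEStronglyMeasurable (fun u => τ * u * deriv p (l₀ + τ * s * u)) F :=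
    fun s => ((continuous_const.mul continuous_id).mul
      (hcont1.comp (by continuity))).aestronglyMeasurable
  -- G is differentiable on the ε-ball with derivative G₁
  have lemA : ∀ s₀ : ℝ, |s₀| < ε → HasDerivAt G (G₁ s₀) s₀ := by
    intro s₀ hs₀
    have hδ : 0 < ε - |s₀| := by linarith
    have key := hasDerivAt_integral_of_dominated_loc_of_deriv_le (μ := F)
      (F := fun s u => p (l₀ + τ * s * u))
      (F' := fun s u => τ * u * deriv p (l₀ + τ * s * u))
      (bound := fun u => τ * D u) (x₀ := s₀) (s := Metric.ball s₀ (ε - |s₀|)) (Metric.ball_mem_nhds _ hδ)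
      (Eventually.of_forall hm0)
      (Integrable.mono' hD (hm0 s₀) (by
        filter_upwards [hdom0] with u h
        simpa [Real.norm_eq_abs] using h s₀ hs₀))
      (hm1 s₀)
      (by
        filter_upwards [hdom1] with u h x hx
        have hxε : |x| < ε := by
          have := abs_sub_abs_le_abs_sub x s₀
          have hball : |x - s₀| < ε - |s₀| := by simpa [Real.dist_eq] using hx
          linarith
        have := h x hxε
        calc ‖τ * u * deriv p (l₀ + τ * x * u)‖
            = τ * |u * deriv p (l₀ + τ * x * u)| := by
              rw [Real.norm_eq_abs, mul_assoc, abs_mul, abs_of_pos hτ]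
          _ ≤ τ * D u := by exact mul_le_mul_of_nonneg_left this hτ.le)
      (hD.const_mul τ)
      (by
        refine Eventually.of_forall fun u => fun x _ => ?_
        have inner : HasDerivAt (fun s : ℝ => l₀ + τ * s * u) (τ * u) x := by
          simpa using (((hasDerivAt_id x).const_mul τ).mul_const u).const_add l₀
        have outer : HasDerivAt p (deriv p (l₀ + τ * x * u)) (l₀ + τ * x * u) :=
          (hdiffp _).hasDerivAt
        have := outer.comp x inner
        exact this.congr_deriv (by ring))
    exact key.2
  -- G₁ has derivative τ² c at 0
  have lemB : HasDerivAt G₁ (τ ^ 2 * c) 0 := by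
    have key := hasDerivAt_integral_of_dominated_loc_of_deriv_le (μ := F)
      (F := fun s u => τ * u * deriv p (l₀ + τ * s * u))
      (F' := fun s u => τ ^ 2 * u ^ 2 * deriv (deriv p) (l₀ + τ * s * u))
      (bound := fun u => τ ^ 2 * D u) (x₀ := 0) (s := Metric.ball 0 ε) (Metric.ball_mem_nhds _ hε)
      (Eventually.of_forall hm1)
      (Integrable.mono' (hD.const_mul τ) (hm1 0) (by
        filter_upwards [hdom1] with u h
        have := h 0 (by simpa using hε)
        calc ‖τ * u * deriv p (l₀ + τ * 0 * u)‖
            = τ * |u * deriv p (l₀ + τ * 0 * u)| := by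
              rw [Real.norm_eq_abs, mul_assoc, abs_mul, abs_of_pos hτ]
          _ ≤ τ * D u := mul_le_mul_of_nonneg_left this hτ.le))
      (((continuous_const.mul (continuous_pow 2)).mul
        (hcont2.comp (by continuity))).aestronglyMeasurable)
      (by
        filter_upwards [hdom2] with u h x hx
        have hxε : |x| < ε := by simpa [Real.dist_eq] using hx
        have := h x hxε
        calc ‖τ ^ 2 * u ^ 2 * deriv (deriv p) (l₀ + τ * x * u)‖
            = τ ^ 2 * |u ^ 2 * deriv (deriv p) (l₀ + τ * x * u)| := by
              rw [Real.norm_eq_abs, mul_assoc, abs_mul, abs_of_pos (by positivity : (0:ℝ) < τ ^ 2)]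
          _ ≤ τ ^ 2 * D u := mul_le_mul_of_nonneg_left this (by positivity))
      (hD.const_mul (τ ^ 2))
      (by
        refine Eventually.of_forall fun u => fun x _ => ?_
        have inner : HasDerivAt (fun s : ℝ => l₀ + τ * s * u) (τ * u) x := by
          simpa using (((hasDerivAt_id x).const_mul τ).mul_const u).const_add l₀
        have outer : HasDerivAt (deriv p) (deriv (deriv p) (l₀ + τ * x * u)) (l₀ + τ * x * u) :=
          (hdiffp' _).hasDerivAt
        have := (outer.comp x inner).const_mul (τ * u)
        exact this.congr_deriv (by ring))
    have := key.2
    have heq : (∫ u, τ ^ 2 * u ^ 2 * deriv (deriv p) (l₀ + τ * 0 * u) ∂F) = τ ^ 2 * c := by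
      have : (fun u : ℝ => τ ^ 2 * u ^ 2 * deriv (deriv p) (l₀ + τ * 0 * u))
          = fun u : ℝ => (τ ^ 2 * deriv (deriv p) l₀) * u ^ 2 := by
        funext u
        have : l₀ + τ * 0 * u = l₀ := by ring
        rw [this]; ring
      rw [this, integral_const_mul, hU2, hc, hit2]
      ring
    rwa [heq] at this
  have hG₁0 : G₁ 0 = 0 := by
    have : (fun u : ℝ => τ * u * deriv p (l₀ + τ * 0 * u))
        = fun u : ℝ => (τ * deriv p l₀) * u := by
      funext u
      have : l₀ + τ * 0 * u = l₀ := by ring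
      rw [this]; ring
    show (∫ u, τ * u * deriv p (l₀ + τ * 0 * u) ∂F) = 0
    rw [this, integral_const_mul, hU1, mul_zero]
  -- slope of G₁ at 0
  have hslope1 : Tendsto (fun s => G₁ s / s) (𝓝[>] (0:ℝ)) (𝓝 (τ ^ 2 * c)) := by
    have h := hasDerivAt_iff_tendsto_slope.mp lemB
    have h' := h.mono_left (nhdsWithin_mono _ (fun x hx => ne_of_gt hx))
    refine h'.congr fun s => ?_
    simp [slope_def_field, hG₁0]
  -- l'Hopital
  have hL : Tendsto (fun s => (G s - G 0) / s ^ 2) (𝓝[>] (0:ℝ)) (𝓝 (τ ^ 2 * c / 2)) := by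
    have hGcont : ContinuousAt G 0 := (lemA 0 (by simpa using hε)).continuousAt
    refine HasDerivAt.lhopital_zero_right_on_Ioo (a := 0) (b := ε) hε
      (f' := G₁) (g' := fun s => 2 * s) ?_ ?_ ?_ ?_ ?_ ?_
    · intro x hx
      exact (lemA x (by rw [abs_of_pos hx.1]; exact hx.2)).sub_const (G 0)
    · intro x hx
      simpa using hasDerivAt_pow 2 x
    · intro x hx
      exact (mul_pos two_pos hx.1).ne'
    · have := hGcont.tendsto.mono_left (nhdsWithin_le_nhds (s := Set.Ioi (0:ℝ)))
      simpa using this.sub_const (G 0)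
    · have : Tendsto (fun s : ℝ => s ^ 2) (𝓝 (0:ℝ)) (𝓝 ((0:ℝ) ^ 2)) :=
        (continuous_pow 2).tendsto 0
      simpa using this.mono_left nhdsWithin_le_nhds
    · refine ((hslope1.div_const 2).congr fun s => ?_)
      ring
  -- transfer via √
  have hsq : Tendsto Real.sqrt (𝓝[>] (0:ℝ)) (𝓝[>] (0:ℝ)) := by
    rw [tendsto_nhdsWithin_iff]
    constructor
    · have := Real.continuous_sqrt.tendsto 0
      rw [Real.sqrt_zero] at this
      exact this.mono_left nhdsWithin_le_nhds
    · filter_upwards [self_mem_nhdsWithin] with x hx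
      exact Real.sqrt_pos.mpr hx
  have hSg : Tendsto (fun η : ℝ => (G (Real.sqrt η) - G 0) / η) (𝓝[>] (0:ℝ))
      (𝓝 (τ ^ 2 * c / 2)) := by
    have := hL.comp hsq
    refine this.congr' ?_
    filter_upwards [self_mem_nhdsWithin] with η (hη : 0 < η)
    simp only [Function.comp_apply]
    rw [Real.sq_sqrt hη.le]
  -- derivative of the inner integral within Ici 0
  have hg : HasDerivWithinAt (fun η : ℝ => ∫ u, p (l₀ + τ * Real.sqrt η * u) ∂F)
      (τ ^ 2 * c / 2) (Set.Ici 0) 0 := by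
    rw [hasDerivWithinAt_iff_tendsto_slope, Set.Ici_sdiff_left]
    refine hSg.congr fun η => ?_
    rw [slope_def_field, sub_zero]
    congr 2
    simp [hG]
  have hg0 : (∫ u, p (l₀ + τ * Real.sqrt 0 * u) ∂F) = p l₀ := by
    simp
  -- compose with log
  have hlog : HasDerivAt Real.log (p l₀)⁻¹ (p l₀) := Real.hasDerivAt_log (ne_of_gt hpos)
  have hfinal := (hg0 ▸ hlog).comp_hasDerivWithinAt 0 hg
  have : HasDerivWithinAt
      (fun η : ℝ => Real.log (∫ u, p (l₀ + τ * Real.sqrt η * u) ∂F))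
      ((p l₀)⁻¹ * (τ ^ 2 * c / 2)) (Set.Ici 0) 0 := by
    exact hfinal.congr_deriv (by rw [hg0])
  convert this using 1
  rw [hU2]
  have hne : p l₀ ≠ 0 := ne_of_gt hpos
  field_simp
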